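/- arXiv:1504.04244 — 2 statements merged into one kernel-verified Lean document; each statement's English description precedes it below -/
import Mathlib

section
/- Let α > 2 and define f(β) = log(1+β)/β^{2/α} for β > 0. Then f has a unique global maximum on (0,∞), attained at β* = -1 + exp(W₀(-(α/2)e^{-α/2}) + α/2), where W₀ is the principal branch of the Lambert W function. -/
set_option maxHeartbeats 800000

/-- For α > 2, f(β) = log(1+β)/β^{2/α} has a unique global
maximum on (0,∞), attained at β* = -1 + exp(W₀(-(α/2)e^{-α/2}) + α/2). -/
theorem log_over_rpow_unique_max (α : ℝ) (hα : α > 2) (W : ℝ → ℝ)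
    (hW : ∀ x : ℝ, -Real.exp (-1) ≤ x → W x * Real.exp (W x) = x ∧ -1 ≤ W x) :
    ∀ β : ℝ, 0 < β →
      β ≠ -1 + Real.exp (W (-(α / 2) * Real.exp (-(α / 2))) + α / 2) →
      Real.log (1 + β) / β ^ (2 / α) <
        Real.log (1 + (-1 + Real.exp (W (-(α / 2) * Real.exp (-(α / 2))) + α / 2))) /
          (-1 + Real.exp (W (-(α / 2) * Real.exp (-(α / 2))) + α / 2)) ^ (2 / α) := by
  have hα0 : (0:ℝ) < α := by linarith
  have hα2 : (1:ℝ) < α / 2 := by linarith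
  set x : ℝ := -(α / 2) * Real.exp (-(α / 2)) with hxdef
  -- x > -exp(-1)
  have hlog : Real.log (α / 2) < α / 2 - 1 :=
    Real.log_lt_sub_one_of_pos (by linarith) (by linarith)
  have hxgt : -Real.exp (-1) < x := by
    have h1 : (α / 2) * Real.exp (-(α / 2)) < Real.exp (-1) := by
      have he : (α / 2) * Real.exp (-(α / 2)) = Real.exp (Real.log (α / 2) + -(α / 2)) := by
        rw [Real.exp_add, Real.exp_log (by linarith)]
      rw [he]
      exact Real.exp_lt_exp.mpr (by linarith)
    have h2 : -(α / 2) * Real.exp (-(α / 2)) = -((α / 2) * Real.exp (-(α / 2))) := by ring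
    rw [hxdef, h2]
    linarith
  obtain ⟨hweq, hwge⟩ := hW x (le_of_lt hxgt)
  set w := W x with hwdef
  have hxneg : x < 0 := by
    have := Real.exp_pos (-(α / 2))
    rw [hxdef]; nlinarith
  have hwneg : w < 0 := by nlinarith [Real.exp_pos w]
  have hwgt : -1 < w := by
    rcases eq_or_lt_of_le hwge with h | h
    · exfalso
      rw [← h] at hweq
      have : (-1 : ℝ) * Real.exp (-1) = -Real.exp (-1) := by ring
      rw [this] at hweq
      linarith
    · exact h
  have hw0 : w ≠ 0 := ne_of_lt hwneg
  set L := w + α / 2 with hLdef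
  set b := -1 + Real.exp (w + α / 2) with hbdef
  have hexpw : Real.exp w = x / w := by
    rw [eq_div_iff hw0]
    linarith [hweq]
  have hkey : Real.exp (-L) = -(2 / α) * w := by
    have h1 : Real.exp (-L) = (Real.exp w)⁻¹ * (Real.exp (α / 2))⁻¹ := by
      rw [show -L = -w + -(α / 2) by rw [hLdef]; ring, Real.exp_add, Real.exp_neg, Real.exp_neg]
    rw [h1, hexpw, hxdef]
    rw [Real.exp_neg]
    have he : Real.exp (α / 2) ≠ 0 := Real.exp_ne_zero _
    field_simp
  have hexpL_pos := Real.exp_pos L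
  have hmul : Real.exp L * Real.exp (-L) = 1 := by rw [← Real.exp_add]; simp
  have hexpL_gt : α / 2 < Real.exp L := by
    have h2 : Real.exp (-L) < 2 / α := by
      rw [hkey]
      have h3 : (0:ℝ) < 2 / α := by positivity
      nlinarith
    have h4 : 1 < Real.exp L * (2 / α) := by nlinarith [mul_lt_mul_of_pos_left h2 hexpL_pos]
    have h5 : Real.exp L * (2 / α) * (α / 2) = Real.exp L := by field_simp
    nlinarith [mul_lt_mul_of_pos_right h4 (show (0:ℝ) < α / 2 by linarith)]
  have hb1 : (1:ℝ) + b = Real.exp L := by rw [hbdef, hLdef]; ring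
  have hbpos : 0 < b := by nlinarith
  have hbm : α / 2 - 1 < b := by nlinarith
  -- the auxiliary function g
  set g : ℝ → ℝ := fun t => t / (1 + t) - (2 / α) * Real.log (1 + t) with hgdef
  have hlog_deriv : ∀ t : ℝ, 0 < 1 + t →
      HasDerivAt (fun s : ℝ => Real.log (1 + s)) (1 / (1 + t)) t := by
    intro t h1t
    have h2 : HasDerivAt (fun s : ℝ => 1 + s) 1 t := by
      simpa using (hasDerivAt_id t).const_add (1:ℝ)
    simpa using h2.log (ne_of_gt h1t)
  have hg_deriv : ∀ t : ℝ, 0 ≤ t →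
      HasDerivAt g (1 / (1 + t) ^ 2 - (2 / α) * (1 / (1 + t))) t := by
    intro t ht
    have h1t : (0:ℝ) < 1 + t := by linarith
    have d1 : HasDerivAt (fun s : ℝ => s / (1 + s)) (1 / (1 + t) ^ 2) t := by
      have h2 : HasDerivAt (fun s : ℝ => 1 + s) 1 t := by
        simpa using (hasDerivAt_id t).const_add (1:ℝ)
      have := (hasDerivAt_id t).div h2 (ne_of_gt h1t)
      refine this.congr_deriv ?_
      simp only [id]; ring
    exact d1.sub ((hlog_deriv t h1t).const_mul (2 / α))
  have hg_cont : ∀ t : ℝ, 0 ≤ t → ContinuousAt g t := fun t ht =>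
    (hg_deriv t ht).continuousAt
  have hg_mono : StrictMonoOn g (Set.Icc 0 (α / 2 - 1)) := by
    apply strictMonoOn_of_deriv_pos (convex_Icc _ _)
    · exact fun t ht => (hg_cont t ht.1).continuousWithinAt
    · intro t ht
      rw [interior_Icc] at ht
      rw [(hg_deriv t (le_of_lt ht.1)).deriv]
      have h1t : (0:ℝ) < 1 + t := by linarith [ht.1]
      have hu : (2:ℝ) / α < 1 / (1 + t) := by
        rw [div_lt_div_iff₀ hα0 h1t]
        linarith [ht.2]
      have hu0 : (0:ℝ) < 1 / (1 + t) := by positivity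
      have hsq : 1 / (1 + t) ^ 2 = (1 / (1 + t)) * (1 / (1 + t)) := by
        field_simp
      rw [hsq]
      nlinarith
  have hg_anti : StrictAntiOn g (Set.Ici (α / 2 - 1)) := by
    apply strictAntiOn_of_deriv_neg (convex_Ici _)
    · intro t ht
      exact (hg_cont t (by simp only [Set.mem_Ici] at ht; linarith)).continuousWithinAt
    · intro t ht
      rw [interior_Ici] at ht
      simp only [Set.mem_Ioi] at ht
      rw [(hg_deriv t (by linarith)).deriv]
      have h1t : (0:ℝ) < 1 + t := by linarith
      have hu : 1 / (1 + t) < 2 / α := by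
        rw [div_lt_div_iff₀ h1t hα0]
        linarith
      have hu0 : (0:ℝ) < 1 / (1 + t) := by positivity
      have hsq : 1 / (1 + t) ^ 2 = (1 / (1 + t)) * (1 / (1 + t)) := by
        field_simp
      rw [hsq]
      nlinarith
  have hg0 : g 0 = 0 := by
    show (0:ℝ) / (1 + 0) - (2 / α) * Real.log (1 + 0) = 0
    norm_num
  have hgb : g b = 0 := by
    have hlogb : Real.log (1 + b) = L := by rw [hb1, Real.log_exp]
    have hbeL : b = Real.exp L - 1 := by rw [hbdef, hLdef]; ring
    show b / (1 + b) - (2 / α) * Real.log (1 + b) = 0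
    rw [hlogb, hb1]
    have hinv : Real.exp (-L) = (Real.exp L)⁻¹ := Real.exp_neg L
    have hLval : L = w + α / 2 := hLdef
    rw [hbeL]
    have heLne : Real.exp L ≠ 0 := Real.exp_ne_zero L
    have h1 : (Real.exp L - 1) / Real.exp L = 1 - Real.exp (-L) := by
      rw [hinv]; field_simp
    rw [h1, hkey, hLval]
    field_simp
    ring
  have hg_pos : ∀ t : ℝ, 0 < t → t < b → 0 < g t := by
    intro t ht htb
    rcases le_or_gt t (α / 2 - 1) with h | h
    · have := hg_mono (Set.mem_Icc.mpr ⟨le_rfl, by linarith⟩)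
        (Set.mem_Icc.mpr ⟨le_of_lt ht, h⟩) ht
      rwa [hg0] at this
    · have := hg_anti (Set.mem_Ici.mpr (le_of_lt h)) (Set.mem_Ici.mpr (le_of_lt hbm)) htb
      rwa [hgb] at this
  have hg_neg : ∀ t : ℝ, b < t → g t < 0 := by
    intro t htb
    have := hg_anti (Set.mem_Ici.mpr (le_of_lt hbm)) (Set.mem_Ici.mpr (by linarith)) htb
    rwa [hgb] at this
  -- the function f
  set f : ℝ → ℝ := fun t => Real.log (1 + t) / t ^ (2 / α) with hfdef
  have hf_deriv : ∀ t : ℝ, 0 < t →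
      HasDerivAt f (t ^ (2 / α - 1) * g t / (t ^ (2 / α)) ^ 2) t := by
    intro t ht
    have h1t : (0:ℝ) < 1 + t := by linarith
    have d1 := hlog_deriv t h1t
    have d2 : HasDerivAt (fun s : ℝ => s ^ (2 / α)) ((2 / α) * t ^ (2 / α - 1)) t :=
      Real.hasDerivAt_rpow_const (Or.inl (ne_of_gt ht))
    have hne : t ^ (2 / α) ≠ 0 := by positivity
    have := d1.div d2 hne
    refine this.congr_deriv ?_
    symm
    have hpow : t ^ (2 / α - 1) * t = t ^ (2 / α) := by
      calc t ^ (2 / α - 1) * t = t ^ (2 / α - 1) * t ^ (1:ℝ) := by rw [Real.rpow_one]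
        _ = t ^ (2 / α - 1 + 1) := (Real.rpow_add ht _ _).symm
        _ = t ^ (2 / α) := by norm_num
    congr 1
    show t ^ (2 / α - 1) * (t / (1 + t) - 2 / α * Real.log (1 + t)) = _
    rw [mul_sub, show t ^ (2 / α - 1) * (t / (1 + t)) = t ^ (2 / α) / (1 + t) by
      rw [← hpow]; ring]
    ring
  have hf_cont : ∀ t : ℝ, 0 < t → ContinuousAt f t := fun t ht =>
    (hf_deriv t ht).continuousAt
  have hf_mono : StrictMonoOn f (Set.Ioc 0 b) := by
    apply strictMonoOn_of_deriv_pos (convex_Ioc _ _)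
    · exact fun t ht => (hf_cont t ht.1).continuousWithinAt
    · intro t ht
      rw [interior_Ioc] at ht
      rw [(hf_deriv t ht.1).deriv]
      have h1 : 0 < t ^ (2 / α - 1) := Real.rpow_pos_of_pos ht.1 _
      have h2 : 0 < (t ^ (2 / α)) ^ 2 := pow_pos (Real.rpow_pos_of_pos ht.1 _) 2
      have h3 := hg_pos t ht.1 ht.2
      exact div_pos (mul_pos h1 h3) h2
  have hf_anti : StrictAntiOn f (Set.Ici b) := by
    apply strictAntiOn_of_deriv_neg (convex_Ici _)
    · intro t ht
      simp only [Set.mem_Ici] at ht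
      exact (hf_cont t (by linarith)).continuousWithinAt
    · intro t ht
      rw [interior_Ici] at ht
      simp only [Set.mem_Ioi] at ht
      have ht0 : 0 < t := by linarith
      rw [(hf_deriv t ht0).deriv]
      have h1 : 0 < t ^ (2 / α - 1) := Real.rpow_pos_of_pos ht0 _
      have h2 : 0 < (t ^ (2 / α)) ^ 2 := pow_pos (Real.rpow_pos_of_pos ht0 _) 2
      have h3 := hg_neg t ht
      have : t ^ (2 / α - 1) * g t < 0 := mul_neg_of_pos_of_neg h1 h3
      exact div_neg_of_neg_of_pos this h2
  intro β hβ hne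
  show f β < f b
  rcases lt_trichotomy β b with h | h | h
  · exact hf_mono (Set.mem_Ioc.mpr ⟨hβ, le_of_lt h⟩) (Set.mem_Ioc.mpr ⟨hbpos, le_rfl⟩) h
  · exact absurd h hne
  · exact hf_anti (Set.mem_Ici.mpr le_rfl) (Set.mem_Ici.mpr (le_of_lt h)) h
end

section
/- A critical point of β ↦ log(1+β)·β^{-2/α} on (0,∞) satisfies (α/2)·β/(1+β) = log(1+β), and the unique positive solution of this equation is β = -1 + exp(W₀(-(α/2)e^{-α/2}) + α/2) for α > 2. -/
open Real Set

private lemma texp_deriv (t : ℝ) : HasDerivAt (fun s : ℝ => s * Real.exp s) ((1 + t) * Real.exp t) t := by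
  have := (hasDerivAt_id t).mul (Real.hasDerivAt_exp t)
  exact this.congr_deriv (by simp only [id_eq]; ring)

private lemma texp_mono : StrictMonoOn (fun t : ℝ => t * Real.exp t) (Set.Ici (-1)) := by
  apply strictMonoOn_of_deriv_pos (convex_Ici _)
  · exact (continuous_id.mul Real.continuous_exp).continuousOn
  · intro x hx
    rw [interior_Ici] at hx
    rw [(texp_deriv x).deriv]
    have hx' : (-1:ℝ) < x := hx
    have : 0 < 1 + x := by linarith
    positivity

private lemma texp_anti : StrictAntiOn (fun t : ℝ => t * Real.exp t) (Set.Iic (-1)) := by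
  apply strictAntiOn_of_deriv_neg (convex_Iic _)
  · exact (continuous_id.mul Real.continuous_exp).continuousOn
  · intro x hx
    rw [interior_Iic] at hx
    rw [(texp_deriv x).deriv]
    have h1 : 1 + x < 0 := by have hx' : x < (-1:ℝ) := hx; linarith
    exact mul_neg_of_neg_of_pos h1 (Real.exp_pos x)

/-- A critical point of β ↦ log(1+β)·β^{-2/α} on (0,∞) satisfies
(α/2)·β/(1+β) = log(1+β), and the unique positive solution of this equation is
β = -1 + exp(W₀(-(α/2)e^{-α/2}) + α/2). -/
theorem critical_point_equation (α : ℝ) (hα : α > 2) (W : ℝ → ℝ)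
    (hW : ∀ x : ℝ, -Real.exp (-1) ≤ x → W x * Real.exp (W x) = x ∧ -1 ≤ W x) :
    (∀ β : ℝ, 0 < β →
        deriv (fun b : ℝ => Real.log (1 + b) * b ^ (-(2 / α))) β = 0 →
        (α / 2) * β / (1 + β) = Real.log (1 + β)) ∧
      (∀ β : ℝ, 0 < β →
        ((α / 2) * β / (1 + β) = Real.log (1 + β) ↔
          β = -1 + Real.exp (W (-(α / 2) * Real.exp (-(α / 2))) + α / 2))) := by
  have hα2 : (1:ℝ) < α / 2 := by linarith
  set x : ℝ := -(α / 2) * Real.exp (-(α / 2)) with hxdef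
  -- x > -exp(-1)
  have hxgt : -Real.exp (-1) < x := by
    have h1 : α / 2 < Real.exp (α / 2 - 1) := by
      have := Real.add_one_lt_exp (x := α / 2 - 1) (by linarith)
      linarith
    have h2 : (α / 2) * Real.exp (-(α / 2)) < Real.exp (-1) := by
      have he : Real.exp (α / 2 - 1) * Real.exp (-(α/2)) = Real.exp (-1) := by
        rw [← Real.exp_add]; ring_nf
      have hp : (0:ℝ) < Real.exp (-(α/2)) := Real.exp_pos _
      calc (α / 2) * Real.exp (-(α / 2)) < Real.exp (α / 2 - 1) * Real.exp (-(α/2)) := by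
            exact mul_lt_mul_of_pos_right h1 hp
        _ = Real.exp (-1) := he
    rw [hxdef]; linarith
  obtain ⟨hWeq, hWge⟩ := hW x (le_of_lt hxgt)
  have hWgt : -1 < W x := by
    rcases lt_or_eq_of_le hWge with h | h
    · exact h
    · exfalso
      rw [← h] at hWeq
      simp only [neg_one_mul] at hWeq
      rw [hxdef] at hWeq
      linarith [hxgt, hWeq]
  -- key: x equals (-α/2) * exp (-α/2)
  have hxval : (-(α/2)) * Real.exp (-(α/2)) = x := by rw [hxdef]
  -- uniqueness lemma
  have huniq : ∀ w : ℝ, -(α/2) < w → w * Real.exp w = x → w = W x := by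
    intro w hwgt hweq
    rcases le_or_gt w (-1) with hle | hlt
    · exfalso
      have h := texp_anti (a := -(α/2)) (b := w) (by simp; linarith) (by simpa using hle) hwgt
      simp only at h
      rw [hxval, hweq] at h
      exact lt_irrefl _ h
    · exact texp_mono.injOn (by simpa using hlt.le) (by simpa using hWge) (by rw [hweq, hWeq])
  constructor
  · -- derivative part
    intro β hβ hderiv
    have h1β : (0:ℝ) < 1 + β := by linarith
    have hc : α ≠ 0 := by linarith
    have hlog : HasDerivAt (fun b : ℝ => Real.log (1 + b)) (1 / (1 + β)) β := by
      have hadd : HasDerivAt (fun b : ℝ => 1 + b) 1 β := by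
        simpa using (hasDerivAt_id' β).const_add (1:ℝ)
      simpa using hadd.log (ne_of_gt h1β)
    have hpow : HasDerivAt (fun b : ℝ => b ^ (-(2/α))) ((-(2/α)) * β ^ (-(2/α) - 1)) β :=
      Real.hasDerivAt_rpow_const (Or.inl (ne_of_gt hβ))
    have hmul := hlog.mul hpow
    rw [(show HasDerivAt (fun b : ℝ => Real.log (1 + b) * b ^ (-(2 / α))) _ β from hmul).deriv] at hderiv
    have hB : (0:ℝ) < β ^ (-(2/α)) := Real.rpow_pos_of_pos hβ _
    have hsub : β ^ (-(2/α) - 1) = β ^ (-(2/α)) / β := by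
      rw [Real.rpow_sub hβ, Real.rpow_one]
    rw [hsub] at hderiv
    have hfact : β ^ (-(2/α)) * (1/(1+β) + Real.log (1+β) * (-(2/α))/β) = 0 := by
      rw [← hderiv]; ring
    have key : 1/(1+β) + Real.log (1+β) * (-(2/α))/β = 0 :=
      (mul_eq_zero.mp hfact).resolve_left (ne_of_gt hB)
    have hαpos : (0:ℝ) < α := by linarith
    field_simp at key ⊢
    nlinarith [key]
  · intro β hβ
    have h1β : (0:ℝ) < 1 + β := by linarith
    constructor
    · intro heq
      set w : ℝ := Real.log (1 + β) - α/2 with hwdef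
      have hwval : w = -(α/2) / (1 + β) := by
        rw [hwdef, ← heq]; field_simp; ring
      have hwgt : -(α/2) < w := by
        rw [hwval, neg_div, neg_lt_neg_iff, div_lt_iff₀ h1β]
        nlinarith
      have hexpw : Real.exp w = (1 + β) * Real.exp (-(α/2)) := by
        rw [hwdef, Real.exp_sub, Real.exp_log h1β]
        rw [Real.exp_neg]
        field_simp
      have hweq : w * Real.exp w = x := by
        rw [hexpw, hwval, hxdef]
        field_simp
      have := huniq w hwgt hweq
      have : Real.exp (W x + α/2) = 1 + β := by
        rw [← this, hwdef]
        rw [show Real.log (1+β) - α/2 + α/2 = Real.log (1+β) by ring, Real.exp_log h1β]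
      rw [← hxdef] at *
      linarith [this]
    · intro heq
      set w : ℝ := W x with hwdef
      have h1βe : 1 + β = Real.exp (w + α/2) := by rw [heq]; ring
      have hlog : Real.log (1 + β) = w + α/2 := by rw [h1βe, Real.log_exp]
      have hwE : w * Real.exp (w + α/2) = -(α/2) := by
        rw [Real.exp_add, ← mul_assoc, hWeq, hxdef, Real.exp_neg]
        field_simp
      rw [hlog, ← h1βe] at *
      have hβne : (1:ℝ) + β ≠ 0 := ne_of_gt h1β
      rw [div_eq_iff hβne]
      have : w * (1 + β) = -(α/2) := by rw [h1βe]; exact hwE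
      nlinarith [this]
end
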